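/- Let m(φ,k) := √(2π) i^k e^{iφk/2} J_k(4|g| sin(φ/2)) for a fixed real g ≠ 0, where J_k is the Bessel function of the first kind. Then for each k, the function φ ↦ m(φ,k) on [-π,π] has only finitely many zeros; consequently the multiplication operator M_m on L²([-π,π]×ℤ) is injective. -/

import Mathlib

open Complex

/-- Bessel function of the first kind of nonnegative integer order `n`,
defined by its power series `J_n(z) = ∑_{j≥0} (−1)^j (z/2)^{n+2j}/(j!(n+j)!)`. -/
noncomputable def besselJNat (n : ℕ) (z : ℂ) : ℂ :=
  ∑' j : ℕ, (-1) ^ j * (z / 2) ^ (n + 2 * j) /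
    ((Nat.factorial j : ℂ) * (Nat.factorial (n + j) : ℂ))

/-- Bessel function of the first kind of integer order `k`, with
`J_{−n}(z) = (−1)^n J_n(z)`. -/
noncomputable def besselJ (k : ℤ) (z : ℂ) : ℂ :=
  if 0 ≤ k then besselJNat k.toNat z
  else (-1) ^ (-k).toNat * besselJNat (-k).toNat z

/-- The multiplier function m(φ,k) = √(2π) i^k e^{iφk/2} J_k(4|g| sin(φ/2)). -/
noncomputable def multiplier (g : ℝ) (φ : ℝ) (k : ℤ) : ℂ :=
  (Real.sqrt (2 * Real.pi) : ℂ) * Complex.I ^ k *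
    Complex.exp (Complex.I * φ * k / 2) *
    besselJ k ((4 * |g| * Real.sin (φ / 2) : ℝ) : ℂ)

/-- coefficients of the even part of the Bessel series -/
noncomputable def bCoef (n : ℕ) (j : ℕ) : ℂ :=
  (-1) ^ j / ((4 : ℂ) ^ j * (Nat.factorial j : ℂ) * (Nat.factorial (n + j) : ℂ))

lemma bCoef_norm_le (n j : ℕ) : ‖bCoef n j‖ ≤ 1 / (Nat.factorial j : ℝ) := by
  have h1 : (0:ℝ) < (Nat.factorial j : ℝ) := by positivity
  have h2 : (0:ℝ) < (Nat.factorial (n+j) : ℝ) := by positivity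
  rw [bCoef, norm_div, norm_pow, norm_neg, norm_one, one_pow]
  rw [norm_mul, norm_mul, norm_pow]
  simp only [Complex.norm_natCast, Complex.norm_ofNat]
  rw [div_le_div_iff₀ (by positivity) h1]
  have h4 : (1:ℝ) ≤ (4:ℝ)^j := one_le_pow₀ (by norm_num : (1:ℝ) ≤ 4)
  have h5 : (1:ℝ) ≤ (Nat.factorial (n+j) : ℝ) := Nat.one_le_cast.mpr (Nat.factorial_pos (n+j))
  nlinarith [mul_le_mul h4 h5 (by norm_num) (by positivity)]

lemma bCoef_radius (n : ℕ) :
    (FormalMultilinearSeries.ofScalars ℂ (bCoef n)).radius = ⊤ := by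
  apply FormalMultilinearSeries.radius_eq_top_of_summable_norm
  intro r
  refine Summable.of_nonneg_of_le (fun j => by positivity) ?_ (Real.summable_pow_div_factorial (r:ℝ))
  · intro j
    rw [FormalMultilinearSeries.ofScalars_norm]
    calc ‖bCoef n j‖ * (r:ℝ)^j ≤ (1 / (Nat.factorial j : ℝ)) * (r:ℝ)^j := by
          apply mul_le_mul_of_nonneg_right (bCoef_norm_le n j) (by positivity)
      _ = (r:ℝ)^j / (Nat.factorial j : ℝ) := by ring

lemma bCoef_analytic (n : ℕ) (w : ℂ) :
    AnalyticAt ℂ (FormalMultilinearSeries.ofScalarsSum (bCoef n)) w := by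
  have h := (FormalMultilinearSeries.ofScalars ℂ (bCoef n)).hasFPowerSeriesOnBall
    (by rw [bCoef_radius]; exact ENNReal.zero_lt_top)
  rw [bCoef_radius n] at h
  exact h.analyticAt_of_mem (by simp [EMetric.mem_ball, edist_lt_top])

lemma bCoef_sum_zero (n : ℕ) :
    FormalMultilinearSeries.ofScalarsSum (bCoef n) 0 = 1 / (Nat.factorial n : ℂ) := by
  rw [FormalMultilinearSeries.ofScalarsSum_zero, bCoef]
  simp

lemma besselJNat_eq (n : ℕ) (z : ℂ) :
    besselJNat n z = (z/2)^n * FormalMultilinearSeries.ofScalarsSum (bCoef n) (z^2) := by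
  rw [FormalMultilinearSeries.ofScalars_sum_eq, ← tsum_mul_left, besselJNat]
  apply tsum_congr
  intro j
  rw [bCoef, smul_eq_mul]
  have hj : ((Nat.factorial j : ℂ)) ≠ 0 := Nat.cast_ne_zero.mpr (Nat.factorial_ne_zero j)
  have hnj : ((Nat.factorial (n+j) : ℂ)) ≠ 0 := Nat.cast_ne_zero.mpr (Nat.factorial_ne_zero (n+j))
  have h4 : ((4:ℂ))^j ≠ 0 := pow_ne_zero _ (by norm_num)
  have hz : (z/2)^(n+2*j) = (z/2)^n * (z^2)^j / 4^j := by
    rw [pow_add, pow_mul, div_pow]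
    ring_nf
    norm_num
  rw [hz]
  field_simp

lemma zfun_eq (g : ℝ) (φ : ℝ) :
    ((4 * |g| * Real.sin (φ/2) : ℝ) : ℂ) = (4*|g| : ℂ) * Complex.sin ((φ:ℂ)/2) := by
  push_cast [Complex.ofReal_sin]
  ring

lemma sin_analytic (φ : ℝ) : AnalyticAt ℝ (fun x : ℝ => Complex.sin ((x:ℂ)/2)) φ := by
  have h : (fun x : ℝ => Complex.sin ((x:ℂ)/2)) =
      fun x : ℝ => (Complex.exp ((x:ℂ) * (-Complex.I/2)) -
        Complex.exp ((x:ℂ) * (Complex.I/2))) * Complex.I / 2 := by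
    funext x
    rw [Complex.sin]
    ring_nf
  rw [h]
  have hof : AnalyticAt ℝ (fun x : ℝ => (x:ℂ)) φ := Complex.ofRealCLM.analyticAt φ
  have h1 : AnalyticAt ℝ (fun x : ℝ => Complex.exp ((x:ℂ) * (-Complex.I/2))) φ :=
    (analyticAt_cexp.restrictScalars).comp (hof.mul analyticAt_const)
  have h2 : AnalyticAt ℝ (fun x : ℝ => Complex.exp ((x:ℂ) * (Complex.I/2))) φ :=
    (analyticAt_cexp.restrictScalars).comp (hof.mul analyticAt_const)
  exact ((h1.sub h2).mul analyticAt_const).div analyticAt_const (by norm_num)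

lemma G_analytic (g : ℝ) (n : ℕ) (φ : ℝ) :
    AnalyticAt ℝ (fun x : ℝ => FormalMultilinearSeries.ofScalarsSum (bCoef n)
      ((((4 * |g| * Real.sin (x/2) : ℝ) : ℂ))^2)) φ := by
  have hz : AnalyticAt ℝ (fun x : ℝ => (((4 * |g| * Real.sin (x/2) : ℝ) : ℂ))^2) φ := by
    have he : (fun x : ℝ => (((4 * |g| * Real.sin (x/2) : ℝ) : ℂ))^2)
        = fun x : ℝ => ((4*|g| : ℂ) * Complex.sin ((x:ℂ)/2))^2 := by
      funext x; rw [zfun_eq]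
    rw [he]
    exact (analyticAt_const.mul (sin_analytic φ)).pow 2
  exact ((bCoef_analytic n _).restrictScalars).comp hz

/-- For fixed real g ≠ 0 and each k, the function φ ↦ m(φ,k) has only
finitely many zeros on [-π,π]; consequently the multiplication operator M_m on
L²([-π,π]×ℤ) is injective. -/
theorem multiplier_finitely_many_zeros_and_injective (g : ℝ) (hg : g ≠ 0) :
    (∀ k : ℤ, {φ ∈ Set.Icc (-Real.pi) Real.pi | multiplier g φ k = 0}.Finite)
    ∧ (∀ f : ℤ → ℝ → ℂ,
        (∀ k : ℤ, ∀ᵐ φ ∂(MeasureTheory.volume.restrict (Set.Icc (-Real.pi) Real.pi)),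
          multiplier g φ k * f k φ = 0) →
        ∀ k : ℤ, f k =ᵐ[MeasureTheory.volume.restrict (Set.Icc (-Real.pi) Real.pi)] 0) := by
  have hfin : ∀ k : ℤ, {φ ∈ Set.Icc (-Real.pi) Real.pi | multiplier g φ k = 0}.Finite := by
    intro k
    obtain ⟨n, hn⟩ : ∃ n : ℕ, ∀ z : ℂ, besselJ k z = 0 ↔ besselJNat n z = 0 := by
      by_cases hk : 0 ≤ k
      · exact ⟨k.toNat, fun z => by rw [besselJ, if_pos hk]⟩
      · refine ⟨(-k).toNat, fun z => ?_⟩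
        rw [besselJ, if_neg hk, mul_eq_zero]
        have : ((-1 : ℂ)) ^ (-k).toNat ≠ 0 := pow_ne_zero _ (by norm_num)
        tauto
    set G : ℝ → ℂ := fun x : ℝ => FormalMultilinearSeries.ofScalarsSum (bCoef n)
      ((((4 * |g| * Real.sin (x/2) : ℝ) : ℂ))^2) with hG
    set T := {φ ∈ Set.Icc (-Real.pi) Real.pi | G φ = 0} with hT
    have hTfin : T.Finite := by
      by_contra hinf
      have hinf' : T.Infinite := hinf
      obtain ⟨x, hx, hacc⟩ := hinf'.exists_accPt_of_subset_isCompact isCompact_Icc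
        (fun φ hφ => hφ.1)
      have hfreq : ∃ᶠ y in nhdsWithin x {x}ᶜ, G y = 0 := by
        rw [accPt_iff_frequently] at hacc
        rw [frequently_nhdsWithin_iff]
        exact hacc.mono (fun y hy => ⟨hy.2.2, hy.1⟩)
      have hall := AnalyticOnNhd.eqOn_zero_of_preconnected_of_frequently_eq_zero
        (f := G) (U := Set.univ) (fun z _ => G_analytic g n z) isPreconnected_univ
        (Set.mem_univ x) hfreq
      have h0 := hall (Set.mem_univ 0)
      have : G 0 = 1 / (Nat.factorial n : ℂ) := by
        rw [hG]
        norm_num [bCoef_sum_zero]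
        simp [bCoef]
      rw [h0] at this
      have hne : (1 : ℂ) / (Nat.factorial n : ℂ) ≠ 0 := by
        simp [Nat.factorial_ne_zero]
      exact hne this.symm
    apply Set.Finite.subset (hTfin.insert 0)
    intro φ hφ
    obtain ⟨hφIcc, hφ0⟩ := hφ
    by_cases hzero : φ = 0
    · exact Set.mem_insert_iff.mpr (Or.inl hzero)
    refine Set.mem_insert_iff.mpr (Or.inr ⟨hφIcc, ?_⟩)
    have h1 : (↑(Real.sqrt (2*Real.pi)) : ℂ) ≠ 0 := by
      rw [ne_eq, ofReal_eq_zero]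
      exact Real.sqrt_ne_zero'.mpr (by positivity)
    have h2 : Complex.I ^ k ≠ 0 := zpow_ne_zero k Complex.I_ne_zero
    have h3 : Complex.exp (Complex.I * φ * k / 2) ≠ 0 := Complex.exp_ne_zero _
    have hb : besselJ k ((4 * |g| * Real.sin (φ/2) : ℝ) : ℂ) = 0 := by
      rw [multiplier] at hφ0
      rcases mul_eq_zero.mp hφ0 with h | h
      · rcases mul_eq_zero.mp h with h' | h'
        · rcases mul_eq_zero.mp h' with h'' | h''
          · exact absurd h'' h1
          · exact absurd h'' h2
        · exact absurd h' h3
      · exact h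
    rw [hn, besselJNat_eq, mul_eq_zero] at hb
    rcases hb with h | h
    · exfalso
      obtain ⟨hz2, -⟩ := pow_eq_zero_iff'.mp h
      rw [div_eq_zero_iff] at hz2
      rcases hz2 with hz2 | hz2
      swap
      · norm_num at hz2
      rw [ofReal_eq_zero] at hz2
      have hsin : Real.sin (φ/2) = 0 := by
        have h4g : (4 * |g| : ℝ) ≠ 0 := mul_ne_zero (by norm_num) (abs_ne_zero.mpr hg)
        rcases mul_eq_zero.mp hz2 with h' | h'
        · exact absurd h' h4g
        · exact h'
      have hπ : Real.pi > 0 := Real.pi_pos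
      have hlt1 : -Real.pi < φ/2 := by
        have := hφIcc.1; linarith
      have hlt2 : φ/2 < Real.pi := by
        have := hφIcc.2; linarith
      have := (Real.sin_eq_zero_iff_of_lt_of_lt hlt1 hlt2).mp hsin
      exact hzero (by linarith)
    · exact h
  refine ⟨hfin, ?_⟩
  intro f hf k
  have hN : MeasureTheory.volume {φ ∈ Set.Icc (-Real.pi) Real.pi | multiplier g φ k = 0} = 0 :=
    (hfin k).measure_zero _
  have hae : ∀ᵐ φ ∂(MeasureTheory.volume.restrict (Set.Icc (-Real.pi) Real.pi)),
      φ ∉ {φ ∈ Set.Icc (-Real.pi) Real.pi | multiplier g φ k = 0} :=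
    MeasureTheory.ae_restrict_of_ae ((MeasureTheory.measure_eq_zero_iff_ae_notMem (μ := MeasureTheory.volume)).mp hN)
  have hmem : ∀ᵐ φ ∂(MeasureTheory.volume.restrict (Set.Icc (-Real.pi) Real.pi)),
      φ ∈ Set.Icc (-Real.pi) Real.pi :=
    MeasureTheory.ae_restrict_mem measurableSet_Icc
  filter_upwards [hf k, hae, hmem] with φ h1 h2 h3
  have hm : multiplier g φ k ≠ 0 := fun h => h2 ⟨h3, h⟩
  have := mul_eq_zero.mp h1
  simp only [Pi.zero_apply]
  tauto
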